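/- Graph comparison: Assume 1 < γ ≤ 5/3. For all p ∈ [0, p_min], φ_R(p) = φ(p), and for all p > p_min, φ_R(p) < φ(p). -/

import Mathlib

open Real Set

lemma gkey (γ : ℝ) (hγ1 : 1 < γ) (hγ2 : γ ≤ 5/3) {x : ℝ} (hx : 1 < x) :
    2*((γ+1)*x+γ-1)^3 < γ*((γ+1)*x+3*γ-1)^2 * x^((γ+1)/γ) := by
  have hγ0 : (0:ℝ) < γ := by linarith
  set β : ℝ := (γ+1)/γ with hβ
  set g : ℝ → ℝ := fun y => γ*((γ+1)*y+(3*γ-1))^2 * y^β / ((γ+1)*y+(γ-1))^3 with hg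
  have hT : ∀ y : ℝ, 1 ≤ y → 0 < (γ+1)*y+(γ-1) := by intro y hy; nlinarith
  have HD : ∀ y : ℝ, 1 ≤ y → HasDerivAt g
      (((γ*(2*((γ+1)*y+(3*γ-1))*(γ+1)) * y^β + γ*((γ+1)*y+(3*γ-1))^2 * (β*y^(β-1))) * ((γ+1)*y+(γ-1))^3
        - γ*((γ+1)*y+(3*γ-1))^2 * y^β * (3*((γ+1)*y+(γ-1))^2*(γ+1))) / (((γ+1)*y+(γ-1))^3)^2) y := by
    intro y hy
    have hy0 : (0:ℝ) < y := by linarith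
    have hS : HasDerivAt (fun z : ℝ => (γ+1)*z+(3*γ-1)) (γ+1) y := by
      simpa using ((hasDerivAt_id y).const_mul (γ+1)).add_const (3*γ-1)
    have hT' : HasDerivAt (fun z : ℝ => (γ+1)*z+(γ-1)) (γ+1) y := by
      simpa using ((hasDerivAt_id y).const_mul (γ+1)).add_const (γ-1)
    have hS2 : HasDerivAt (fun z : ℝ => ((γ+1)*z+(3*γ-1))^2) (2*((γ+1)*y+(3*γ-1))*(γ+1)) y := by
      simpa [Pi.pow_def] using hS.pow 2
    have hrp : HasDerivAt (fun z : ℝ => z ^ β) (β * y^(β-1)) y :=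
      Real.hasDerivAt_rpow_const (Or.inl hy0.ne')
    have hn : HasDerivAt (fun z : ℝ => γ*((γ+1)*z+(3*γ-1))^2 * z^β)
        (γ*(2*((γ+1)*y+(3*γ-1))*(γ+1)) * y^β + γ*((γ+1)*y+(3*γ-1))^2 * (β*y^(β-1))) y := by
      have h := (hS2.const_mul γ).mul hrp
      exact h
    have hd : HasDerivAt (fun z : ℝ => ((γ+1)*z+(γ-1))^3) (3*((γ+1)*y+(γ-1))^2*(γ+1)) y := by
      simpa [Pi.pow_def] using hT'.pow 3
    exact hn.div hd (pow_ne_zero 3 (hT y hy).ne')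
  have mono : StrictMonoOn g (Ici 1) := by
    apply strictMonoOn_of_deriv_pos (convex_Ici 1)
    · intro y hy
      exact (HD y hy).continuousAt.continuousWithinAt
    · intro y hy
      rw [interior_Ici] at hy
      have hy1 : (1:ℝ) < y := hy
      have hy0 : (0:ℝ) < y := by linarith
      rw [(HD y hy1.le).deriv]
      have hsplit : y ^ β = y * y ^ (β-1) := by
        nth_rewrite 1 [show β = 1 + (β - 1) by ring]
        rw [Real.rpow_add hy0, Real.rpow_one]
      have hfact : (γ*(2*((γ+1)*y+(3*γ-1))*(γ+1)) * y^β + γ*((γ+1)*y+(3*γ-1))^2 * (β*y^(β-1))) * ((γ+1)*y+(γ-1))^3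
          - γ*((γ+1)*y+(3*γ-1))^2 * y^β * (3*((γ+1)*y+(γ-1))^2*(γ+1))
          = (γ+1)*(y-1)*((γ+1)*y-(γ-1)*(3*γ-1)) * y^(β-1) * ((γ+1)*y+(3*γ-1)) * ((γ+1)*y+(γ-1))^2 := by
        rw [hsplit, hβ]
        field_simp
        ring
      rw [hfact]
      have h1 : (0:ℝ) < (γ+1)*y-(γ-1)*(3*γ-1) := by nlinarith
      have h2 : (0:ℝ) < y ^ (β-1) := Real.rpow_pos_of_pos hy0 _
      have h3 := hT y hy1.le
      have hSpos : (0:ℝ) < (γ+1)*y+(3*γ-1) := by nlinarith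
      exact div_pos
        (mul_pos (mul_pos (mul_pos (mul_pos (mul_pos (by linarith : (0:ℝ) < γ+1)
          (by linarith : (0:ℝ) < y-1)) h1) h2) hSpos) (pow_pos h3 2))
        (pow_pos (pow_pos h3 3) 2)
  have hlt := mono (by norm_num : (1:ℝ) ∈ Ici (1:ℝ)) (Set.mem_Ici.mpr hx.le) hx
  have hTx := hT x hx.le
  have hg1 : g 1 = 2 := by
    simp only [hg, mul_one, Real.one_rpow]
    rw [show (γ+1)+(3*γ-1) = 4*γ by ring, show (γ+1)+(γ-1) = 2*γ by ring]
    field_simp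
    ring
  rw [hg1] at hlt
  simp only [hg] at hlt
  rw [lt_div_iff₀ (pow_pos hTx 3)] at hlt
  nlinarith [hlt]

lemma core (γ : ℝ) (hγ1 : 1 < γ) (hγ2 : γ ≤ 5/3) {q : ℝ} (hq : 1 < q) :
    2/(γ-1)*(q^((γ-1)/(2*γ)) - 1)
      < (q-1)*Real.sqrt (2/(γ*(γ+1)))*(q+(γ-1)/(γ+1))^(-(1/2):ℝ) := by
  have hγ0 : (0:ℝ) < γ := by linarith
  have hγp : (0:ℝ) < γ+1 := by linarith
  have hγm : (0:ℝ) < γ-1 := by linarith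
  set μ : ℝ := (γ-1)/(γ+1) with hμ
  set θ : ℝ := (γ-1)/(2*γ) with hθ
  set C : ℝ := Real.sqrt (2/(γ*(γ+1))) with hC
  have hμ0 : 0 < μ := div_pos hγm hγp
  set F : ℝ → ℝ := fun y => (y-1)*C*(y+μ)^(-(1/2):ℝ) - 2/(γ-1)*(y^θ - 1) with hF
  have HD : ∀ y : ℝ, 1 ≤ y → HasDerivAt F
      ((1*C)*(y+μ)^(-(1/2):ℝ) + (y-1)*C*(1 * (-(1/2)) * (y+μ)^((-(1/2):ℝ)-1))
        - 2/(γ-1)*(θ*y^(θ-1))) y := by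
    intro y hy
    have hy0 : (0:ℝ) < y := by linarith
    have hyμ : (0:ℝ) < y + μ := by linarith
    have h1 : HasDerivAt (fun z : ℝ => (z-1)*C) (1*C) y :=
      ((hasDerivAt_id y).sub_const 1).mul_const C
    have h2 : HasDerivAt (fun z : ℝ => (z+μ)^(-(1/2):ℝ)) (1 * (-(1/2)) * (y+μ)^((-(1/2):ℝ)-1)) y := by
      exact (((hasDerivAt_id y).add_const μ).rpow_const (p := (-(1/2):ℝ)) (Or.inl hyμ.ne'))
    have h3 : HasDerivAt (fun z : ℝ => 2/(γ-1)*(z^θ - 1)) (2/(γ-1)*(θ*y^(θ-1))) y :=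
      ((Real.hasDerivAt_rpow_const (Or.inl hy0.ne')).sub_const 1).const_mul _
    exact (h1.mul h2).sub h3
  have mono : StrictMonoOn F (Ici 1) := by
    apply strictMonoOn_of_deriv_pos (convex_Ici 1)
    · intro y hy
      exact (HD y hy).continuousAt.continuousWithinAt
    · intro y hy
      rw [interior_Ici] at hy
      have hy1 : (1:ℝ) < y := hy
      have hy0 : (0:ℝ) < y := by linarith
      have hyμ : (0:ℝ) < y + μ := by linarith
      rw [(HD y hy1.le).deriv]
      have hsplit : (y+μ)^(-(1/2):ℝ) = (y+μ) * (y+μ)^(-(3/2):ℝ) := by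
        nth_rewrite 1 [show (-(1/2):ℝ) = 1 + (-(3/2)) by norm_num]
        rw [Real.rpow_add hyμ, Real.rpow_one]
      have hexp : ((-(1/2):ℝ))-1 = -(3/2) := by norm_num
      have hθγ : 2/(γ-1)*θ = 1/γ := by rw [hθ]; field_simp
      have h9 : 2/(γ-1)*(θ*y^(θ-1)) = (1/γ)*y^(θ-1) := by
        rw [← mul_assoc, hθγ]
      -- main squared comparison
      have hM : (0:ℝ) < (y+μ) - (y-1)/2 := by linarith
      have hrp3 : (0:ℝ) < (y+μ)^(-(3/2):ℝ) := Real.rpow_pos_of_pos hyμ _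
      have main : (1/γ)*y^(θ-1) < C*((y+μ) - (y-1)/2)*(y+μ)^(-(3/2):ℝ) := by
        apply lt_of_pow_lt_pow_left₀ 2
          (mul_nonneg (mul_nonneg (Real.sqrt_nonneg _) hM.le) hrp3.le)
        have hU : (0:ℝ) < y^((γ+1)/γ) := Real.rpow_pos_of_pos hy0 _
        have hsq1 : ((1/γ)*y^(θ-1))^2 = (1/γ)^2 * (y^((γ+1)/γ))⁻¹ := by
          rw [mul_pow, sq (y^(θ-1)), ← Real.rpow_add hy0,
            show (θ-1)+(θ-1) = -((γ+1)/γ) by rw [hθ]; field_simp; ring,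
            Real.rpow_neg hy0.le]
        have hsq2 : (C*((y+μ) - (y-1)/2)*(y+μ)^(-(3/2):ℝ))^2
            = 2/(γ*(γ+1)) * ((y+μ) - (y-1)/2)^2 * ((y+μ)^3)⁻¹ := by
          rw [mul_pow, mul_pow, hC, Real.sq_sqrt (by positivity),
            sq ((y+μ)^(-(3/2):ℝ)), ← Real.rpow_add hyμ,
            show (-(3/2):ℝ)+(-(3/2)) = -(3:ℕ) by norm_num,
            Real.rpow_neg hyμ.le, Real.rpow_natCast]
        rw [hsq1, hsq2]
        have hkey := gkey γ hγ1 hγ2 hy1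
        have hT : (0:ℝ) < (γ+1)*y+γ-1 := by nlinarith
        have hdiff : 2/(γ*(γ+1)) * ((y+μ) - (y-1)/2)^2 * ((y+μ)^3)⁻¹ - (1/γ)^2 * (y^((γ+1)/γ))⁻¹
            = (γ*((γ+1)*y+3*γ-1)^2 * y^((γ+1)/γ) - 2*((γ+1)*y+γ-1)^3)
              / (2*γ^2*((γ+1)*y+γ-1)^3 * y^((γ+1)/γ)) := by
          rw [hμ]
          have hyμ' : y + (γ-1)/(γ+1) ≠ 0 := by positivity
          field_simp
          ring
        have hpos : (0:ℝ) < (γ*((γ+1)*y+3*γ-1)^2 * y^((γ+1)/γ) - 2*((γ+1)*y+γ-1)^3)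
              / (2*γ^2*((γ+1)*y+γ-1)^3 * y^((γ+1)/γ)) :=
          div_pos (by linarith) (by positivity)
        linarith [hdiff ▸ hpos]
      calc (0:ℝ) < C*((y+μ) - (y-1)/2)*(y+μ)^(-(3/2):ℝ) - (1/γ)*y^(θ-1) := by linarith
        _ = 1*C*(y+μ)^(-(1/2):ℝ) + (y-1)*C*(1*(-(1/2))*(y+μ)^((-(1/2):ℝ)-1)) - 2/(γ-1)*(θ*y^(θ-1)) := by
            rw [h9, hexp, hsplit]; ring
  have hlt := mono (by norm_num : (1:ℝ) ∈ Ici (1:ℝ)) (Set.mem_Ici.mpr hq.le) hq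
  have hF1 : F 1 = 0 := by
    simp [hF, Real.one_rpow]
  rw [hF1] at hlt
  simp only [hF] at hlt
  linarith [hlt]

lemma side_lt (γ ρ pz c p : ℝ) (hγ1 : 1 < γ) (hγ2 : γ ≤ 5/3) (hρ : 0 < ρ)
    (hpz : 0 < pz) (hc : 0 < c) (hp : pz < p) :
    2 * Real.sqrt (γ * pz / (ρ * c)) * c / (γ - 1) * ((p / pz) ^ ((γ - 1) / (2 * γ)) - 1)
      < (p - pz) * Real.sqrt (2 * c / ((γ + 1) * ρ) / (p + (γ - 1) / (γ + 1) * pz)) := by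
  have hγ0 : (0:ℝ) < γ := by linarith
  have hγp : (0:ℝ) < γ+1 := by linarith
  have hγm : (0:ℝ) < γ-1 := by linarith
  set μ : ℝ := (γ-1)/(γ+1) with hμ
  have hμ0 : 0 < μ := div_pos hγm hγp
  set q : ℝ := p / pz with hqdef
  have hq : 1 < q := (one_lt_div hpz).mpr hp
  have hqμ : (0:ℝ) < q + μ := by linarith
  have hpμ : (0:ℝ) < p + μ * pz := by nlinarith
  have hcore := core γ hγ1 hγ2 hq
  set C : ℝ := Real.sqrt (2/(γ*(γ+1))) with hC
  set K : ℝ := Real.sqrt (γ * pz / (ρ * c)) * c with hK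
  have hK0 : 0 < K := mul_pos (Real.sqrt_pos.mpr (by positivity)) hc
  have hmul := mul_lt_mul_of_pos_left hcore hK0
  have hLHS : K * (2/(γ-1)*(q^((γ-1)/(2*γ)) - 1))
      = 2 * Real.sqrt (γ * pz / (ρ * c)) * c / (γ - 1) * ((p / pz) ^ ((γ - 1) / (2 * γ)) - 1) := by
    rw [hK, ← hqdef]; ring
  have hRHS : K * ((q-1)*C*(q+μ)^(-(1/2):ℝ))
      = (p - pz) * Real.sqrt (2 * c / ((γ + 1) * ρ) / (p + (γ - 1) / (γ + 1) * pz)) := by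
    have hD0 : (0:ℝ) ≤ 2 * c / ((γ + 1) * ρ) / (p + (γ - 1) / (γ + 1) * pz) := by
      rw [← hμ]; positivity
    have hrpp : (0:ℝ) < (q+μ)^(-(1/2):ℝ) := Real.rpow_pos_of_pos hqμ _
    have hC0 : (0:ℝ) ≤ C := Real.sqrt_nonneg _
    have hX0 : (0:ℝ) ≤ K * ((q-1)*C*(q+μ)^(-(1/2):ℝ)) :=
      mul_nonneg hK0.le (mul_nonneg (mul_nonneg (by linarith) hC0) hrpp.le)
    have hY0 : (0:ℝ) ≤ (p - pz) * Real.sqrt (2 * c / ((γ + 1) * ρ) / (p + (γ - 1) / (γ + 1) * pz)) :=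
      mul_nonneg (by linarith) (Real.sqrt_nonneg _)
    have e1 : ((q+μ)^(-(1/2):ℝ))^2 = (q+μ)⁻¹ := by
      rw [sq, ← Real.rpow_add hqμ, show (-(1/2):ℝ) + (-(1/2)) = -1 by norm_num,
        Real.rpow_neg_one]
    have e2 : (Real.sqrt (γ*pz/(ρ*c)))^2 = γ*pz/(ρ*c) := Real.sq_sqrt (by positivity)
    have e3 : C^2 = 2/(γ*(γ+1)) := by rw [hC]; exact Real.sq_sqrt (by positivity)
    have e4 : (Real.sqrt (2 * c / ((γ + 1) * ρ) / (p + (γ - 1) / (γ + 1) * pz)))^2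
        = 2 * c / ((γ + 1) * ρ) / (p + (γ - 1) / (γ + 1) * pz) := Real.sq_sqrt hD0
    have hsq : (K * ((q-1)*C*(q+μ)^(-(1/2):ℝ)))^2
        = ((p - pz) * Real.sqrt (2 * c / ((γ + 1) * ρ) / (p + (γ - 1) / (γ + 1) * pz)))^2 := by
      have hexp1 : (K * ((q-1)*C*(q+μ)^(-(1/2):ℝ)))^2
          = (Real.sqrt (γ*pz/(ρ*c)))^2 * c^2 * (q-1)^2 * C^2 * ((q+μ)^(-(1/2):ℝ))^2 := by
        rw [hK]; ring
      rw [hexp1, e1, e2, e3, mul_pow, e4, hqdef, hμ]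
      have hW : (0:ℝ) < (γ+1)*p + (γ-1)*pz := by nlinarith
      have hA : p/pz + (γ-1)/(γ+1) = ((γ+1)*p + (γ-1)*pz)/(pz*(γ+1)) := by
        field_simp
      have hB : p + (γ-1)/(γ+1)*pz = ((γ+1)*p + (γ-1)*pz)/(γ+1) := by
        field_simp
      rw [hA, hB]
      have hW' : (γ+1)*p + (γ-1)*pz ≠ 0 := hW.ne'
      field_simp
    calc K * ((q-1)*C*(q+μ)^(-(1/2):ℝ))
        = Real.sqrt ((K * ((q-1)*C*(q+μ)^(-(1/2):ℝ)))^2) := (Real.sqrt_sq hX0).symm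
      _ = Real.sqrt (((p - pz) * Real.sqrt (2 * c / ((γ + 1) * ρ) / (p + (γ - 1) / (γ + 1) * pz)))^2) := by rw [hsq]
      _ = (p - pz) * Real.sqrt (2 * c / ((γ + 1) * ρ) / (p + (γ - 1) / (γ + 1) * pz)) := Real.sqrt_sq hY0
  rw [hLHS, hRHS] at hmul
  exact hmul

lemma side_le (γ ρ pz c p a : ℝ) (hγ1 : 1 < γ) (hγ2 : γ ≤ 5/3) (hρ : 0 < ρ)
    (hpz : 0 < pz) (hc : 0 < c) (ha : a = Real.sqrt (γ * pz / (ρ * c))) (hp : 0 < p) :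
    2 * a * c / (γ - 1) * ((p / pz) ^ ((γ - 1) / (2 * γ)) - 1)
      ≤ (if pz ≤ p then
          (p - pz) * Real.sqrt (2 * c / ((γ + 1) * ρ) / (p + (γ - 1) / (γ + 1) * pz))
        else
          2 * a * c / (γ - 1) * ((p / pz) ^ ((γ - 1) / (2 * γ)) - 1)) := by
  by_cases h : pz ≤ p
  · rw [if_pos h]
    rcases eq_or_lt_of_le h with he | hlt
    · rw [← he]
      simp [div_self hpz.ne', Real.one_rpow]
    · have := side_lt γ ρ pz c p hγ1 hγ2 hρ hpz hc hlt
      rw [← ha] at this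
      linarith [this]
  · rw [if_neg h]

lemma side_lt' (γ ρ pz c p a : ℝ) (hγ1 : 1 < γ) (hγ2 : γ ≤ 5/3) (hρ : 0 < ρ)
    (hpz : 0 < pz) (hc : 0 < c) (ha : a = Real.sqrt (γ * pz / (ρ * c))) (hp : pz < p) :
    2 * a * c / (γ - 1) * ((p / pz) ^ ((γ - 1) / (2 * γ)) - 1)
      < (if pz ≤ p then
          (p - pz) * Real.sqrt (2 * c / ((γ + 1) * ρ) / (p + (γ - 1) / (γ + 1) * pz))
        else
          2 * a * c / (γ - 1) * ((p / pz) ^ ((γ - 1) / (2 * γ)) - 1)) := by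
  rw [if_pos hp.le]
  have := side_lt γ ρ pz c p hγ1 hγ2 hρ hpz hc hp
  rw [← ha] at this
  exact this

theorem stmt_16 (γ b ρL ρR uL uR pL pR aL aR : ℝ) (φ φR : ℝ → ℝ)
    (hγ1 : 1 < γ) (hγ2 : γ ≤ 5/3) (hb : 0 ≤ b)
    (hρL : 0 < ρL) (hρR : 0 < ρR) (hpL : 0 < pL) (hpR : 0 < pR)
    (hcovL0 : 0 < 1 - b * ρL) (hcovL1 : 1 - b * ρL < 1)
    (hcovR0 : 0 < 1 - b * ρR) (hcovR1 : 1 - b * ρR < 1)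
    (haL : aL = Real.sqrt (γ * pL / (ρL * (1 - b * ρL))))
    (haR : aR = Real.sqrt (γ * pR / (ρR * (1 - b * ρR))))
    (hφ : ∀ p, φ p =
      (if pL ≤ p then
          (p - pL) * Real.sqrt (2 * (1 - b * ρL) / ((γ + 1) * ρL) /
            (p + (γ - 1) / (γ + 1) * pL))
        else
          2 * aL * (1 - b * ρL) / (γ - 1) * ((p / pL) ^ ((γ - 1) / (2 * γ)) - 1)) +
      (if pR ≤ p then
          (p - pR) * Real.sqrt (2 * (1 - b * ρR) / ((γ + 1) * ρR) /
            (p + (γ - 1) / (γ + 1) * pR))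
        else
          2 * aR * (1 - b * ρR) / (γ - 1) * ((p / pR) ^ ((γ - 1) / (2 * γ)) - 1)) +
      uR - uL)
    (hφR : ∀ p, φR p =
      2 * aL * (1 - b * ρL) / (γ - 1) * ((p / pL) ^ ((γ - 1) / (2 * γ)) - 1) +
      2 * aR * (1 - b * ρR) / (γ - 1) * ((p / pR) ^ ((γ - 1) / (2 * γ)) - 1) +
      uR - uL) :
    (∀ p, 0 ≤ p → p ≤ min pL pR → φR p = φ p) ∧
      ∀ p, min pL pR < p → φR p < φ p := by
  constructor
  · intro p hp0 hpmin
    rw [hφ, hφR]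
    have hpl : p ≤ pL := le_trans hpmin (min_le_left _ _)
    have hpr : p ≤ pR := le_trans hpmin (min_le_right _ _)
    have hL : (if pL ≤ p then
          (p - pL) * Real.sqrt (2 * (1 - b * ρL) / ((γ + 1) * ρL) /
            (p + (γ - 1) / (γ + 1) * pL))
        else
          2 * aL * (1 - b * ρL) / (γ - 1) * ((p / pL) ^ ((γ - 1) / (2 * γ)) - 1))
        = 2 * aL * (1 - b * ρL) / (γ - 1) * ((p / pL) ^ ((γ - 1) / (2 * γ)) - 1) := by
      by_cases h : pL ≤ p
      · have he : p = pL := le_antisymm hpl h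
        rw [if_pos h, he]
        simp [div_self hpL.ne', Real.one_rpow]
      · rw [if_neg h]
    have hR : (if pR ≤ p then
          (p - pR) * Real.sqrt (2 * (1 - b * ρR) / ((γ + 1) * ρR) /
            (p + (γ - 1) / (γ + 1) * pR))
        else
          2 * aR * (1 - b * ρR) / (γ - 1) * ((p / pR) ^ ((γ - 1) / (2 * γ)) - 1))
        = 2 * aR * (1 - b * ρR) / (γ - 1) * ((p / pR) ^ ((γ - 1) / (2 * γ)) - 1) := by
      by_cases h : pR ≤ p
      · have he : p = pR := le_antisymm hpr h
        rw [if_pos h, he]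
        simp [div_self hpR.ne', Real.one_rpow]
      · rw [if_neg h]
    rw [hL, hR]
  · intro p hpmin
    rw [hφ, hφR]
    have hp0 : 0 < p := lt_trans (lt_min hpL hpR) hpmin
    have hLle := side_le γ ρL pL (1 - b * ρL) p aL hγ1 hγ2 hρL hpL hcovL0 haL hp0
    have hRle := side_le γ ρR pR (1 - b * ρR) p aR hγ1 hγ2 hρR hpR hcovR0 haR hp0
    rcases min_lt_iff.mp hpmin with h | h
    · have hLlt := side_lt' γ ρL pL (1 - b * ρL) p aL hγ1 hγ2 hρL hpL hcovL0 haL h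
      linarith
    · have hRlt := side_lt' γ ρR pR (1 - b * ρR) p aR hγ1 hγ2 hρR hpR hcovR0 haR h
      linarith
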